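/- arXiv:2007.14512 — 2 statements merged into one kernel-verified Lean document; each statement's English description precedes it below -/
import Mathlib

section
/- Let W = δ(U(π,u,yu)) ∈ T_I(G) satisfy ζ(W) = δ(U(π̂,u,ŷu)) ≠ W, where the ζ-move swaps terminal subpaths of π_{u_j}, π_{u_{j'}} at the central vertex of G_{J_p}. Then ℓ(ŷ) = ℓ(y) − 1 if the triple (π_{u_j},π_{u_{j'}},p) is a proper crossing or a defective noncrossing, and ℓ(ŷ) = ℓ(y) + 1 if it is a proper noncrossing or a defective crossing. -/
/- Common combinatorial setup: star networks, covering path families,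
   crossing/noncrossing statistics, and the base ring ℤ[q^{1/2},q^{-1/2}]. -/

open Equiv Finset
open scoped Classical

noncomputable section

/-- The ring `ℤ[q^{1/2}, q^{-1/2}]`, realized as Laurent polynomials in the
variable `q^{1/2}` (so the exponent-`k` monomial is `q^{k/2}`). -/
abbrev R2 : Type := LaurentPolynomial ℤ

/-- `q^{k/2}`. -/
def Qp (k : ℤ) : R2 := LaurentPolynomial.T k

/-- `q`. -/
def qq : R2 := LaurentPolynomial.T 2

/-- Coxeter length of a permutation, i.e. its inversion number. -/
def len {n : ℕ} (w : Perm (Fin n)) : ℕ :=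
  ((univ : Finset (Fin n × Fin n)).filter fun p => p.1 < p.2 ∧ w p.2 < w p.1).card

/-- Membership in the interval `J = [a,b] ⊆ [n]`. -/
def memJ {n : ℕ} (J : Fin n × Fin n) (i : Fin n) : Prop := J.1 ≤ i ∧ i ≤ J.2

/-- Membership in the subgroup `S_J ≤ S_n` generated by the adjacent
transpositions `s_a, …, s_{b-1}` of the interval `J = [a,b]`; equivalently,
the permutations supported on `[a,b]`. -/
def inSJ {n : ℕ} (J : Fin n × Fin n) (w : Perm (Fin n)) : Prop :=
  ∀ i, w i ≠ i → memJ J i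

/-- A path family covering the star network `G_{J_1} ∘ ⋯ ∘ G_{J_m}` is
faithfully encoded by the permutation of the wire positions realized at each
simple-star factor: at factor `p` the paths whose current positions lie in
`J_p` pass through the central vertex and are permuted arbitrarily within
`J_p` (every entering and leaving edge being used exactly once), while all
other paths use their unique horizontal edge.  Thus a covering family is a
sequence `vs` of permutations with `vs p` supported on `J_p`. -/
def IsPathFamily {n m : ℕ} (Js : Fin m → Fin n × Fin n)
    (vs : Fin m → Perm (Fin n)) : Prop :=
  ∀ p, inSJ (Js p) (vs p)

/-- The position of the path starting at source `i` just before factor `k`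
(as a permutation of sources). -/
def posAt {n m : ℕ} (vs : Fin m → Perm (Fin n)) (k : ℕ) : Perm (Fin n) :=
  (((List.ofFn vs).take k).reverse).prod

/-- The type of a covering path family: the path starting at source `i`
terminates at sink `typeOf vs i`. -/
def typeOf {n m : ℕ} (vs : Fin m → Perm (Fin n)) : Perm (Fin n) := posAt vs m

/-- The path from source `i` passes through the central vertex of the factor
`G_{J_p}`. -/
def centeredAt {n m : ℕ} (Js : Fin m → Fin n × Fin n) (vs : Fin m → Perm (Fin n))
    (p : Fin m) (i : Fin n) : Prop :=
  (Js p).1 < (Js p).2 ∧ memJ (Js p) (posAt vs p i)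

/-- The paths from sources `i` and `j` both pass through the central vertex of
the factor `G_{J_p}`. -/
def meetAt {n m : ℕ} (Js : Fin m → Fin n × Fin n) (vs : Fin m → Perm (Fin n))
    (p : Fin m) (i j : Fin n) : Prop :=
  centeredAt Js vs p i ∧ centeredAt Js vs p j

/-- The triple `(π_i, π_j, p)` is a crossing: the two paths intersect at the
central vertex of `G_{J_p}` and cross there. -/
def crossingAt {n m : ℕ} (Js : Fin m → Fin n × Fin n) (vs : Fin m → Perm (Fin n))
    (p : Fin m) (i j : Fin n) : Prop :=
  meetAt Js vs p i j ∧
    ¬ ((posAt vs p i < posAt vs p j) ↔ (posAt vs (p.1 + 1) i < posAt vs (p.1 + 1) j))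

/-- `cross(π)`: the number of crossings of the path family. -/
def crossNum {n m : ℕ} (Js : Fin m → Fin n × Fin n)
    (vs : Fin m → Perm (Fin n)) : ℕ :=
  ((univ : Finset ((Fin n × Fin n) × Fin m)).filter fun x =>
    x.1.1 < x.1.2 ∧ crossingAt Js vs x.2 x.1.1 x.1.2).card

/-- The triple `(π_i, π_j, p)` is a noncrossing with `π_i` entering and
leaving the central vertex of `G_{J_p}` below `π_j`. -/
def noncrossBelow {n m : ℕ} (Js : Fin m → Fin n × Fin n) (vs : Fin m → Perm (Fin n))
    (p : Fin m) (i j : Fin n) : Prop :=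
  meetAt Js vs p i j ∧
    posAt vs p i < posAt vs p j ∧ posAt vs (p.1 + 1) i < posAt vs (p.1 + 1) j

/-- `incross(U)` for a tableau `U` containing the paths of `π`, recorded via
the function `col` assigning to each path (index) the index of the column of
`U` containing it: the number of inverted noncrossings, i.e. noncrossings
`(π_i, π_j, p)` (with `π_i` below `π_j`) such that `π_j` lies in an earlier
column of `U` than `π_i`. -/
def incrossNum {n m : ℕ} (Js : Fin m → Fin n × Fin n) (vs : Fin m → Perm (Fin n))
    (col : Fin n → ℕ) : ℕ :=
  ((univ : Finset ((Fin n × Fin n) × Fin m)).filter fun x =>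
    noncrossBelow Js vs x.2 x.1.1 x.1.2 ∧ col x.1.2 < col x.1.1).card

/-- The number of crossings of the two paths `π_i, π_j` strictly before the
factor `G_{J_p}`. -/
def crossBefore {n m : ℕ} (Js : Fin m → Fin n × Fin n) (vs : Fin m → Perm (Fin n))
    (p : Fin m) (i j : Fin n) : ℕ :=
  ((univ : Finset (Fin m)).filter fun k => k < p ∧ crossingAt Js vs k i j).card

/-- The triple `(π_i, π_j, p)` is defective: the paths meet at the central
vertex of `G_{J_p}` having previously crossed an odd number of times. -/
def defectiveAt {n m : ℕ} (Js : Fin m → Fin n × Fin n) (vs : Fin m → Perm (Fin n))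
    (p : Fin m) (i j : Fin n) : Prop :=
  meetAt Js vs p i j ∧ Odd (crossBefore Js vs p i j)

/-- `dfct(π)`: the number of defective triples of the path family. -/
def dfctNum {n m : ℕ} (Js : Fin m → Fin n × Fin n)
    (vs : Fin m → Perm (Fin n)) : ℕ :=
  ((univ : Finset ((Fin n × Fin n) × Fin m)).filter fun x =>
    x.1.1 < x.1.2 ∧ defectiveAt Js vs x.2 x.1.1 x.1.2).card

/-- `cdncross(W)`: the number of defective noncrossings between pairs of
paths appearing in the same column of the tableau recorded by `col`. -/
def cdncrossNum {n m : ℕ} (Js : Fin m → Fin n × Fin n) (vs : Fin m → Perm (Fin n))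
    (col : Fin n → ℕ) : ℕ :=
  ((univ : Finset ((Fin n × Fin n) × Fin m)).filter fun x =>
    x.1.1 < x.1.2 ∧ defectiveAt Js vs x.2 x.1.1 x.1.2 ∧
      ¬ crossingAt Js vs x.2 x.1.1 x.1.2 ∧ col x.1.1 = col x.1.2).card

/-- The adjacent transposition `s_{i+1}` (0-indexed: swaps positions `i` and
`i+1`). -/
def swp {n : ℕ} (i : ℕ) (h : i + 1 < n) : Perm (Fin n) :=
  Equiv.swap ⟨i, by omega⟩ ⟨i + 1, h⟩

end
/- Young subgroups, minimal coset representatives, the induced sign character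
`ε_q^λ`, and column-strict tableaux (encoded by column assignments). -/

noncomputable section
open Equiv Finset
open scoped Classical

/-- Given a composition `lam = (λ_1, …, λ_r)` of `n`, the index of the block
`B_k = [λ_1 + ⋯ + λ_{k-1} + 1, λ_1 + ⋯ + λ_k]` containing the (0-indexed)
position `i`. -/
def blockIdx (lam : List ℕ) (i : ℕ) : ℕ :=
  ((List.range lam.length).filter fun k => (lam.take (k + 1)).sum ≤ i).length

/-- Membership in the Young subgroup `S_λ`: the permutations preserving each
block `B_k`. -/
def inYoung {n : ℕ} (lam : List ℕ) (w : Perm (Fin n)) : Prop :=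
  ∀ i : Fin n, blockIdx lam ((w i : Fin n) : ℕ) = blockIdx lam (i : ℕ)

/-- `u` is the minimum-length representative of its coset `S_λ u`
(in the paper's conventions, of the left coset `u S_λ` used in the
factorization `w = w_- w^*`): `u` has no inversions whose two values lie in a
common block. -/
def isMinRep {n : ℕ} (lam : List ℕ) (u : Perm (Fin n)) : Prop :=
  ∀ i j : Fin n, i < j →
    blockIdx lam ((u i : Fin n) : ℕ) = blockIdx lam ((u j : Fin n) : ℕ) →
      u i < u j

/-- The induced sign character `ε_q^λ = sgn ↑_{H_λ(q)}^{H_n(q)}`, computed in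
the natural basis: `H_n(q)` is a free right `H_λ(q)`-module with basis
`{T_u}` indexed by the minimum-length coset representatives, every basis
element factors as `T_{τ∘u} = T_u T_τ` with `τ ∈ S_λ`, the sign character
sends `T_τ` to `(-1)^{ℓ(τ)}`, and the character of the induced module
`H_n(q) ⊗_{H_λ(q)} sgn` is obtained by summing the diagonal coefficients. -/
def epsChar {n : ℕ} {H : Type*} [Ring H] [Algebra R2 H] (lam : List ℕ)
    (T : Module.Basis (Perm (Fin n)) R2 H) (h : H) : R2 :=
  ∑ u ∈ (univ : Finset (Perm (Fin n))).filter (fun u => isMinRep lam u),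
    ∑ τ ∈ (univ : Finset (Perm (Fin n))).filter (fun τ => inYoung lam τ),
      (-1 : R2) ^ len τ * T.repr (h * T u) (τ * u)

/-- A column-strict tableau of shape `λᵗ` (whose columns therefore have
lengths `λ_1, …, λ_r`) filled with the paths of a covering path family of
type `typeOf vs`, encoded by the assignment `f` sending each path to the
index of its column: column `k` must have `λ_k` entries, and since the
entries of a column are arranged bottom-to-top in increasing order of source
index, column-strictness says that the sink indices of the paths in a common
column also increase with the source indices. -/
def IsColStrictAssign {n m : ℕ} (lam : List ℕ) (vs : Fin m → Perm (Fin n))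
    (f : Fin n → Fin lam.length) : Prop :=
  (∀ k : Fin lam.length,
      ((univ : Finset (Fin n)).filter fun i => f i = k).card = lam.get k) ∧
    ∀ i j : Fin n, f i = f j → i < j → typeOf vs i < typeOf vs j

end
/- The data of the involution ζ on the tableau set T_I.  An ordered set
partition `I = (I_1, …, I_r)` of `[n]` of type `λ` is encoded by the
permutation `u = u(I)` (increasing on each block `B_k`, with `I_k = u(B_k)`);
an element `U(π, u, yu)` of `U_I(G)` is encoded by the covering path family
`π` (with `typeOf π = u ∘ y ∘ u⁻¹` for some `y ∈ S_λ`); its image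
`W = δ(U(π,u,yu)) ∈ T_I(G)` is the tableau of shape `λᵗ` whose `k`-th column
contains the paths with sources in `I_k`, so the column of the path `i` in
`W` is `colOf lam u i`. -/

noncomputable section
open Equiv Finset
open scoped Classical

/-- The column of the path `π_i` in the tableau `δ(U(π,u,yu)) ∈ T_I`. -/
def colOf {n : ℕ} (lam : List ℕ) (u : Perm (Fin n)) (i : Fin n) : ℕ :=
  blockIdx lam ((u⁻¹ i : Fin n) : ℕ)

/-- Column `c` of the tableau `δ(U(π,u,yu))` is column-strict: its sink
indices increase (bottom to top) together with its source indices. -/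
def colStrictCol {n m : ℕ} (lam : List ℕ) (u : Perm (Fin n))
    (vs : Fin m → Perm (Fin n)) (c : ℕ) : Prop :=
  ∀ i i' : Fin n, colOf lam u i = c → colOf lam u i' = c → i < i' →
    typeOf vs i < typeOf vs i'

/-- The path family obtained by swapping the terminal subpaths of the paths
from sources `i` and `i'`, beginning at the central vertex of the factor
`G_{J_p}`: the permutation realized at factor `p` is composed with the
transposition of the two leaving positions. -/
def zetaSwap {n m : ℕ} (vs : Fin m → Perm (Fin n)) (p : Fin m)
    (i i' : Fin n) : Fin m → Perm (Fin n) :=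
  fun k => if k = p then
    Equiv.swap (posAt vs (p.1 + 1) i) (posAt vs (p.1 + 1) i') * vs p
  else vs k

/-- The data entering the definition of the involution `ζ = ζ_I` at a
non-column-strict tableau `W = δ(U(π,u,yu)) ∈ T_I(G)`:
`tc` is the greatest index of a non-column-strict column of `W`; `p` is the
greatest index such that at least two paths of column `tc` pass through the
interior vertex of `G_{J_p}`; and `j, j'` are the two positions in block `tc`
whose paths `π_{u_j}, π_{u_{j'}}` (through that vertex) have the
right-to-left lexicographically greatest pair of sink indices, normalized so
that the sink of `π_{u_{j'}}` is the larger.  Then `ζ(W)` is obtained from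
`W` by replacing `π` with `zetaSwap vs p (u j) (u j')`. -/
structure ZetaData {n m : ℕ} (Js : Fin m → Fin n × Fin n) (lam : List ℕ)
    (u : Perm (Fin n)) (vs : Fin m → Perm (Fin n)) : Type where
  tc : ℕ
  p : Fin m
  j : Fin n
  j' : Fin n
  htc : ¬ colStrictCol lam u vs tc
  htcMax : ∀ c : ℕ, tc < c → colStrictCol lam u vs c
  hpMeet : ∃ i i' : Fin n, i ≠ i' ∧ colOf lam u i = tc ∧ colOf lam u i' = tc ∧
    centeredAt Js vs p i ∧ centeredAt Js vs p i'
  hpMax : ∀ p' : Fin m, p < p' →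
    ¬ ∃ i i' : Fin n, i ≠ i' ∧ colOf lam u i = tc ∧ colOf lam u i' = tc ∧
      centeredAt Js vs p' i ∧ centeredAt Js vs p' i'
  hne : j ≠ j'
  hjcol : blockIdx lam (j : ℕ) = tc
  hjcol' : blockIdx lam (j' : ℕ) = tc
  hjcent : centeredAt Js vs p (u j)
  hjcent' : centeredAt Js vs p (u j')
  hord : typeOf vs (u j) < typeOf vs (u j')
  hmax : ∀ k k' : Fin n, k ≠ k' →
    blockIdx lam (k : ℕ) = tc → blockIdx lam (k' : ℕ) = tc →
    centeredAt Js vs p (u k) → centeredAt Js vs p (u k') →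
    typeOf vs (u k) < typeOf vs (u k') →
    (typeOf vs (u k') < typeOf vs (u j') ∨
      (k' = j' ∧ typeOf vs (u k) ≤ typeOf vs (u j)))

/-- The number `b` of paths of `π` which enter the factor `G_{J_p}` between
the paths from sources `i` and `i'`, and which also leave `G_{J_p}` between
the same two paths. -/
def betweenNum {n m : ℕ} (Js : Fin m → Fin n × Fin n) (vs : Fin m → Perm (Fin n))
    (p : Fin m) (i i' : Fin n) : ℕ :=
  ((univ : Finset (Fin n)).filter fun x =>
    x ≠ i ∧ x ≠ i' ∧ centeredAt Js vs p x ∧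
      (min (posAt vs p i) (posAt vs p i') < posAt vs p x ∧
        posAt vs p x < max (posAt vs p i) (posAt vs p i')) ∧
      (min (posAt vs (p.1 + 1) i) (posAt vs (p.1 + 1) i') < posAt vs (p.1 + 1) x ∧
        posAt vs (p.1 + 1) x < max (posAt vs (p.1 + 1) i) (posAt vs (p.1 + 1) i'))).card

end
section AuxLemmas
open Equiv Finset
variable {n m : ℕ}

lemma posAt_zero (vs : Fin m → Perm (Fin n)) : posAt vs 0 = 1 := by
  simp [posAt]

lemma posAt_succ (vs : Fin m → Perm (Fin n)) (k : ℕ) (hk : k < m) :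
    posAt vs (k + 1) = vs ⟨k, hk⟩ * posAt vs k := by
  unfold posAt
  rw [List.take_succ]
  have h1 : (List.ofFn vs)[k]? = some (vs ⟨k, hk⟩) := by
    rw [List.getElem?_eq_getElem (by simpa using hk)]
    simp
  rw [h1]
  simp

lemma fixOut {Js : Fin m → Fin n × Fin n} {vs : Fin m → Perm (Fin n)}
    (hvs : IsPathFamily Js vs) (p : Fin m) {x : Fin n}
    (hx : ¬ memJ (Js p) x) : vs p x = x := by
  by_contra h
  exact hx (hvs p x h)

lemma mapsJ {Js : Fin m → Fin n × Fin n} {vs : Fin m → Perm (Fin n)}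
    (hvs : IsPathFamily Js vs) (p : Fin m) {x : Fin n}
    (hx : memJ (Js p) x) : memJ (Js p) (vs p x) := by
  by_contra h
  have h2 : vs p (vs p x) = vs p x := fixOut hvs p h
  have h3 : vs p x = x := (vs p).injective h2
  rw [h3] at h
  exact h hx

end AuxLemmas
section AuxLemmas2
open Equiv Finset
variable {n m : ℕ} {Js : Fin m → Fin n × Fin n} {vs : Fin m → Perm (Fin n)}

lemma step_order (hJs : ∀ p, (Js p).1 ≤ (Js p).2) (hvs : IsPathFamily Js vs)
    (K : Fin m) {i i' : Fin n} (hne : i ≠ i')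
    (hnm : ¬ meetAt Js vs K i i') :
    (posAt vs (K.1 + 1) i < posAt vs (K.1 + 1) i' ↔ posAt vs K.1 i < posAt vs K.1 i') := by
  have hsucc : posAt vs (K.1 + 1) = vs K * posAt vs K.1 := by
    rw [posAt_succ vs K.1 K.2]
  set A := posAt vs K.1 i with hA'
  set B := posAt vs K.1 i' with hB'
  have hAB : A ≠ B := fun h => hne ((posAt vs K.1).injective h)
  rw [hsucc]
  simp only [Perm.mul_apply, ← hA', ← hB']
  by_cases hA : memJ (Js K) A <;> by_cases hB : memJ (Js K) B
  · exfalso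
    have hlt : (Js K).1 < (Js K).2 := by
      rcases lt_or_eq_of_le (hJs K) with h | h
      · exact h
      · exfalso
        apply hAB
        have e1 : A = (Js K).1 := le_antisymm (le_trans hA.2 h.ge) hA.1
        have e2 : B = (Js K).1 := le_antisymm (le_trans hB.2 h.ge) hB.1
        rw [e1, e2]
    exact hnm ⟨⟨hlt, hA⟩, ⟨hlt, hB⟩⟩
  · have hBfix : vs K B = B := fixOut hvs K hB
    have hA2 : memJ (Js K) (vs K A) := mapsJ hvs K hA
    rw [hBfix]
    rcases not_and_or.mp hB with h | h
    · have hlt : B < (Js K).1 := lt_of_not_ge h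
      constructor
      · intro hc; exact absurd hc (not_lt.mpr (le_of_lt (lt_of_lt_of_le hlt hA2.1)))
      · intro hc; exact absurd hc (not_lt.mpr (le_of_lt (lt_of_lt_of_le hlt hA.1)))
    · have hlt : (Js K).2 < B := lt_of_not_ge h
      constructor
      · intro _; exact lt_of_le_of_lt hA.2 hlt
      · intro _; exact lt_of_le_of_lt hA2.2 hlt
  · have hAfix : vs K A = A := fixOut hvs K hA
    have hB2 : memJ (Js K) (vs K B) := mapsJ hvs K hB
    rw [hAfix]
    rcases not_and_or.mp hA with h | h
    · have hlt : A < (Js K).1 := lt_of_not_ge h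
      constructor
      · intro _; exact lt_of_lt_of_le hlt hB.1
      · intro _; exact lt_of_lt_of_le hlt hB2.1
    · have hlt : (Js K).2 < A := lt_of_not_ge h
      constructor
      · intro hc; exact absurd hc (not_lt.mpr (le_of_lt (lt_of_le_of_lt hB2.2 hlt)))
      · intro hc; exact absurd hc (not_lt.mpr (le_of_lt (lt_of_le_of_lt hB.2 hlt)))
  · rw [fixOut hvs K hA, fixOut hvs K hB]

end AuxLemmas2
section AuxLemmas3
open Equiv Finset
variable {n m : ℕ} {Js : Fin m → Fin n × Fin n} {vs : Fin m → Perm (Fin n)}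

lemma step_iff (hJs : ∀ p, (Js p).1 ≤ (Js p).2) (hvs : IsPathFamily Js vs)
    (K : Fin m) {i i' : Fin n} (hne : i ≠ i') :
    (posAt vs (K.1 + 1) i < posAt vs (K.1 + 1) i') ↔
      ((posAt vs K.1 i < posAt vs K.1 i') ↔ ¬ crossingAt Js vs K i i') := by
  by_cases hc : crossingAt Js vs K i i'
  · have h := hc.2
    simp only [hc, not_true]
    tauto
  · simp only [hc, not_false_iff, iff_true]
    by_cases hm : meetAt Js vs K i i'
    · have h : ((posAt vs (K : ℕ) i < posAt vs (K : ℕ) i') ↔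
          (posAt vs (K.1 + 1) i < posAt vs (K.1 + 1) i')) := by
        by_contra h
        exact hc ⟨hm, h⟩
      exact h.symm
    · exact step_order hJs hvs K hne hm

lemma parity_lemma (hJs : ∀ p, (Js p).1 ≤ (Js p).2) (hvs : IsPathFamily Js vs)
    {i i' : Fin n} (hne : i ≠ i') :
    ∀ k : ℕ, k ≤ m →
      ((posAt vs k i < posAt vs k i') ↔
        ((i < i') ↔ ¬ Odd (((univ : Finset (Fin m)).filter fun q : Fin m =>
          (q : ℕ) < k ∧ crossingAt Js vs q i i').card))) := by
  intro k
  induction k with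
  | zero =>
    intro _
    have h0 : ((univ : Finset (Fin m)).filter fun q : Fin m =>
        (q : ℕ) < 0 ∧ crossingAt Js vs q i i') = ∅ := by
      apply Finset.filter_false_of_mem
      intro q _
      simp
    rw [posAt_zero, h0]
    simp
  | succ k ih =>
    intro hk1
    have hk : k < m := hk1
    have ihk := ih (le_of_lt hk)
    set K : Fin m := ⟨k, hk⟩ with hK
    have hsplit : (((univ : Finset (Fin m)).filter fun q : Fin m =>
        (q : ℕ) < k + 1 ∧ crossingAt Js vs q i i').card) =
        (((univ : Finset (Fin m)).filter fun q : Fin m =>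
        (q : ℕ) < k ∧ crossingAt Js vs q i i').card) +
        (if crossingAt Js vs K i i' then 1 else 0) := by
      have heq : ((univ : Finset (Fin m)).filter fun q : Fin m =>
          (q : ℕ) < k + 1 ∧ crossingAt Js vs q i i') =
          ((univ : Finset (Fin m)).filter fun q : Fin m =>
          ((q : ℕ) < k ∧ crossingAt Js vs q i i') ∨ (q = K ∧ crossingAt Js vs q i i')) := by
        apply Finset.filter_congr
        intro q _
        constructor
        · rintro ⟨h1, h2⟩
          rcases Nat.lt_succ_iff_lt_or_eq.mp h1 with h | h
          · exact Or.inl ⟨h, h2⟩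
          · exact Or.inr ⟨Fin.ext h, h2⟩
        · rintro (⟨h1, h2⟩ | ⟨h1, h2⟩)
          · exact ⟨Nat.lt_succ_of_lt h1, h2⟩
          · exact ⟨by rw [h1]; exact Nat.lt_succ_self k, h2⟩
      rw [heq, Finset.filter_or, Finset.card_union_of_disjoint]
      · congr 1
        by_cases hc : crossingAt Js vs K i i'
        · rw [if_pos hc]
          have : ((univ : Finset (Fin m)).filter fun q : Fin m =>
              q = K ∧ crossingAt Js vs q i i') = {K} := by
            ext q
            simp only [Finset.mem_filter, Finset.mem_univ, true_and, Finset.mem_singleton]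
            constructor
            · exact fun h => h.1
            · intro h; subst h; exact ⟨rfl, hc⟩
          rw [this]; rfl
        · rw [if_neg hc]
          have : ((univ : Finset (Fin m)).filter fun q : Fin m =>
              q = K ∧ crossingAt Js vs q i i') = ∅ := by
            apply Finset.filter_false_of_mem
            rintro q _ ⟨h1, h2⟩
            subst h1
            exact hc h2
          rw [this]; rfl
      · rw [Finset.disjoint_left]
        rintro q hq1 hq2
        simp only [Finset.mem_filter] at hq1 hq2
        have := hq1.2.1
        rw [hq2.2.1] at this
        exact absurd this (lt_irrefl k)
    rw [hsplit]
    have hstep : (posAt vs (k + 1) i < posAt vs (k + 1) i') ↔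
        ((posAt vs k i < posAt vs k i') ↔ ¬ crossingAt Js vs K i i') :=
      step_iff hJs hvs K hne (i := i) (i' := i')
    rw [hstep, ihk]
    set c := (((univ : Finset (Fin m)).filter fun q : Fin m =>
      (q : ℕ) < k ∧ crossingAt Js vs q i i').card) with hcdef
    clear_value c
    by_cases hc : crossingAt Js vs K i i'
    · rw [if_pos hc, Nat.odd_add_one]
      have hB := hc
      constructor
      · intro h
        by_cases ho : Odd c <;> by_cases hb : i < i' <;> simp_all <;>
          exact absurd ho (Nat.not_odd_iff_even.mpr h)
      · intro h
        by_cases ho : Odd c <;> by_cases hb : i < i' <;> simp_all <;>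
          exact absurd ho (Nat.not_odd_iff_even.mpr h)
    · rw [if_neg hc, Nat.add_zero]
      constructor
      · intro h
        by_cases ho : Odd c <;> by_cases hb : i < i' <;> simp_all <;>
          exact absurd ho (Nat.not_odd_iff_even.mpr h)
      · intro h
        by_cases ho : Odd c <;> by_cases hb : i < i' <;> simp_all <;>
          exact absurd ho (Nat.not_odd_iff_even.mpr h)

lemma tail_order (hJs : ∀ p, (Js p).1 ≤ (Js p).2) (hvs : IsPathFamily Js vs)
    {i i' : Fin n} (hne : i ≠ i') (p : Fin m)
    (hno : ∀ q : Fin m, p < q → ¬ meetAt Js vs q i i') :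
    (posAt vs (p.1 + 1) i < posAt vs (p.1 + 1) i' ↔ typeOf vs i < typeOf vs i') := by
  have key : ∀ k : ℕ, p.1 + 1 ≤ k → k ≤ m →
      (posAt vs k i < posAt vs k i' ↔ posAt vs (p.1 + 1) i < posAt vs (p.1 + 1) i') := by
    intro k
    induction k with
    | zero => intro h; omega
    | succ k ih =>
      intro h1 h2
      rcases Nat.lt_or_ge (p.1 + 1) (k + 1) with h | h
      · have hk : k < m := h2
        have hpk : p < (⟨k, hk⟩ : Fin m) := by
          apply Fin.lt_def.mpr; show p.1 < k; omega
        have := step_order hJs hvs ⟨k, hk⟩ hne (hno _ hpk)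
        rw [this]
        exact ih (by omega) (by omega)
      · have : p.1 + 1 = k + 1 := le_antisymm h1 h
        rw [this]
  exact (key m (p.2) (le_refl m)).symm

end AuxLemmas3
section AuxLemmas4
open Equiv Finset
variable {n m : ℕ} {Js : Fin m → Fin n × Fin n} {vs : Fin m → Perm (Fin n)}

lemma posAt_zetaSwap_le (vs : Fin m → Perm (Fin n)) (p : Fin m) (i i' : Fin n) :
    ∀ k : ℕ, k ≤ p.1 → posAt (zetaSwap vs p i i') k = posAt vs k := by
  intro k
  induction k with
  | zero => intro _; rw [posAt_zero, posAt_zero]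
  | succ k ih =>
    intro hk
    have hk2 : k < m := lt_trans (lt_of_lt_of_le (Nat.lt_succ_self k) hk) p.2
    rw [posAt_succ _ k hk2, posAt_succ _ k hk2, ih (by omega)]
    congr 1
    show zetaSwap vs p i i' ⟨k, hk2⟩ = vs ⟨k, hk2⟩
    unfold zetaSwap
    rw [if_neg]
    intro h
    have : k = p.1 := by rw [← h]
    omega

lemma posAt_zetaSwap_ge (vs : Fin m → Perm (Fin n)) (p : Fin m) (i i' : Fin n) :
    ∀ k : ℕ, p.1 + 1 ≤ k → k ≤ m →
      posAt (zetaSwap vs p i i') k =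
        posAt vs k * Equiv.swap i i' := by
  have base : posAt (zetaSwap vs p i i') (p.1 + 1) =
      posAt vs (p.1 + 1) * Equiv.swap i i' := by
    rw [posAt_succ _ p.1 p.2, posAt_succ _ p.1 p.2, posAt_zetaSwap_le vs p i i' p.1 le_rfl]
    have h1 : zetaSwap vs p i i' ⟨p.1, p.2⟩ =
        Equiv.swap (posAt vs (p.1 + 1) i) (posAt vs (p.1 + 1) i') * vs p := by
      unfold zetaSwap
      rw [if_pos rfl]
    rw [h1, mul_assoc]
    have h2 : vs p * posAt vs p.1 = posAt vs (p.1 + 1) := (posAt_succ vs p.1 p.2).symm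
    rw [h2]
    ext x
    simp only [Perm.mul_apply]
    by_cases hx : x = i
    · subst hx
      rw [Equiv.swap_apply_left, Equiv.swap_apply_left]
    · by_cases hx' : x = i'
      · subst hx'
        rw [Equiv.swap_apply_right, Equiv.swap_apply_right]
      · rw [Equiv.swap_apply_of_ne_of_ne hx hx',
          Equiv.swap_apply_of_ne_of_ne
            (fun h => hx ((posAt vs (p.1 + 1)).injective h))
            (fun h => hx' ((posAt vs (p.1 + 1)).injective h))]
  intro k
  induction k with
  | zero => intro h; omega
  | succ k ih =>
    intro h1 h2
    rcases Nat.lt_or_ge (p.1 + 1) (k + 1) with h | h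
    · have hk : k < m := h2
      rw [posAt_succ _ k hk, posAt_succ _ k hk, ih (by omega) (by omega)]
      have hne : zetaSwap vs p i i' ⟨k, hk⟩ = vs ⟨k, hk⟩ := by
        unfold zetaSwap
        rw [if_neg]
        intro hcon
        have : k = p.1 := by rw [← hcon]
        omega
      rw [hne, mul_assoc]
    · have : p.1 + 1 = k + 1 := le_antisymm h1 h
      rw [← this]
      exact base

lemma typeOf_zetaSwap (vs : Fin m → Perm (Fin n)) (p : Fin m) (i i' : Fin n) :
    typeOf (zetaSwap vs p i i') = typeOf vs * Equiv.swap i i' := by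
  unfold typeOf
  exact posAt_zetaSwap_ge vs p i i' m p.2 le_rfl

lemma blockIdx_mono (lam : List ℕ) {i i' : ℕ} (h : i ≤ i') :
    blockIdx lam i ≤ blockIdx lam i' := by
  unfold blockIdx
  rw [← List.countP_eq_length_filter, ← List.countP_eq_length_filter]
  apply List.countP_mono_left
  intro k _ hk
  simp only [decide_eq_true_eq] at *
  omega

lemma blockIdx_between {lam : List ℕ} {a b c : ℕ} (h1 : a ≤ c) (h2 : c ≤ b)
    (h3 : blockIdx lam a = blockIdx lam b) : blockIdx lam c = blockIdx lam a :=
  le_antisymm (h3 ▸ blockIdx_mono lam h2) (blockIdx_mono lam h1)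

end AuxLemmas4
section SwapLen
open Equiv Finset

lemma len_mul_swap_of_lt {n : ℕ} (w : Perm (Fin n)) (a b : Fin n) (hab : a < b)
    (hw : w a < w b)
    (hbet : ∀ c : Fin n, a < c → c < b → ¬ (w a < w c ∧ w c < w b)) :
    len (w * Equiv.swap a b) = len w + 1 := by
  classical
  set t : Perm (Fin n) := Equiv.swap a b with ht
  have hdich : ∀ c : Fin n, a < c → c < b → w c < w a ∨ w b < w c := by
    intro c hac hcb
    have h1 : w c ≠ w a := fun h => absurd (w.injective h) (ne_of_gt hac)
    have h2 : w c ≠ w b := fun h => absurd (w.injective h) (ne_of_lt hcb)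
    rcases lt_or_gt_of_ne h1 with h | h
    · exact Or.inl h
    · rcases lt_or_gt_of_ne h2 with h' | h'
      · exact absurd ⟨h, h'⟩ (hbet c hac hcb)
      · exact Or.inr h'
  set S' : Finset (Fin n × Fin n) :=
    (univ : Finset (Fin n × Fin n)).filter
      (fun q => q.1 < q.2 ∧ (w * t) q.2 < (w * t) q.1) with hS'
  set S : Finset (Fin n × Fin n) :=
    (univ : Finset (Fin n × Fin n)).filter
      (fun q => q.1 < q.2 ∧ w q.2 < w q.1) with hS
  have hta : t a = b := Equiv.swap_apply_left a b
  have htb : t b = a := Equiv.swap_apply_right a b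
  have htfix : ∀ x : Fin n, x ≠ a → x ≠ b → t x = x :=
    fun x h1 h2 => Equiv.swap_apply_of_ne_of_ne h1 h2
  have hmemab : (a, b) ∈ S' := by
    rw [hS', Finset.mem_filter]
    refine ⟨Finset.mem_univ _, hab, ?_⟩
    simp only [Perm.mul_apply, hta, htb]
    exact hw
  set F : Fin n × Fin n → Fin n × Fin n := fun q =>
    if (q.1 = a ∧ a < q.2 ∧ q.2 < b) ∨ (q.2 = b ∧ a < q.1 ∧ q.1 < b) then q
    else (t q.1, t q.2) with hF
  have hFpos : ∀ q : Fin n × Fin n,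
      ((q.1 = a ∧ a < q.2 ∧ q.2 < b) ∨ (q.2 = b ∧ a < q.1 ∧ q.1 < b)) → F q = q := by
    intro q hq
    rw [hF]
    simp only [if_pos hq]
  have hFneg : ∀ q : Fin n × Fin n,
      ¬ ((q.1 = a ∧ a < q.2 ∧ q.2 < b) ∨ (q.2 = b ∧ a < q.1 ∧ q.1 < b)) →
        F q = (t q.1, t q.2) := by
    intro q hq
    rw [hF]
    simp only [if_neg hq]
  -- basic facts about F on sorted pairs ≠ (a,b)
  have hFsort : ∀ x y : Fin n, x < y → (x, y) ≠ (a, b) →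
      (F (x, y)).1 < (F (x, y)).2 ∧ F (x, y) ≠ (a, b) ∧ F (F (x, y)) = (x, y) := by
    intro x y hxy hne
    by_cases hc : (x = a ∧ a < y ∧ y < b) ∨ (y = b ∧ a < x ∧ x < b)
    · have e : F (x, y) = (x, y) := hFpos (x, y) hc
      refine ⟨?_, ?_, ?_⟩
      · rw [e]; exact hxy
      · rw [e]; exact hne
      · rw [e, e]
    · have hFxy : F (x, y) = (t x, t y) := hFneg (x, y) hc
      push_neg at hc
      obtain ⟨hc1, hc2⟩ := hc
      have hba : b ≠ a := ne_of_gt hab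
      by_cases hx : x = a
      · have hyb : y ≠ b := by
          intro h; exact hne (by rw [hx, h])
        have hay : a < y := hx ▸ hxy
        have hyge : b < y := lt_of_le_of_ne (hc1 hx hay) (Ne.symm hyb)
        have hya : y ≠ a := ne_of_gt hay
        have e : F (x, y) = (b, y) := by rw [hFxy, hx, hta, htfix y hya hyb]
        have hcond : ¬ ((b = a ∧ a < y ∧ y < b) ∨ (y = b ∧ a < b ∧ b < b)) := by
          push_neg
          exact ⟨fun h => absurd h hba, fun h => absurd h hyb⟩
        refine ⟨by rw [e]; exact hyge, ?_, ?_⟩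
        · rw [e]; intro hcon
          exact hba ((Prod.ext_iff.mp hcon).1)
        · have e3 : F (b, y) = (t b, t y) := hFneg (b, y) hcond
          rw [e, e3, htb, htfix y hya hyb, hx]
      · by_cases hx' : x = b
        · have hyb : b < y := hx' ▸ hxy
          have hya : y ≠ a := ne_of_gt (lt_trans hab hyb)
          have hyb' : y ≠ b := ne_of_gt hyb
          have e : F (x, y) = (a, y) := by rw [hFxy, hx', htb, htfix y hya hyb']
          have hcond : ¬ ((a = a ∧ a < y ∧ y < b) ∨ (y = b ∧ a < a ∧ a < b)) := by
            push_neg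
            exact ⟨fun _ _ => le_of_lt hyb, fun h => absurd h hyb'⟩
          refine ⟨by rw [e]; exact lt_trans hab hyb, ?_, ?_⟩
          · rw [e]; intro hcon
            exact hyb' ((Prod.ext_iff.mp hcon).2)
          · have e3 : F (a, y) = (t a, t y) := hFneg (a, y) hcond
            rw [e, e3, hta, htfix y hya hyb', hx']
        · have htx : t x = x := htfix x hx hx'
          by_cases hy : y = a
          · have hxa : x < a := hy ▸ hxy
            have e : F (x, y) = (x, b) := by rw [hFxy, htx, hy, hta]
            have hcond : ¬ ((x = a ∧ a < b ∧ b < b) ∨ (b = b ∧ a < x ∧ x < b)) := by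
              push_neg
              exact ⟨fun h => absurd h hx, fun _ h => absurd (lt_trans h hxa) (lt_irrefl a)⟩
            refine ⟨by rw [e]; exact lt_trans hxa hab, ?_, ?_⟩
            · rw [e]; intro hcon
              exact hx ((Prod.ext_iff.mp hcon).1)
            · have e3 : F (x, b) = (t x, t b) := hFneg (x, b) hcond
              rw [e, e3, htx, htb, hy]
          · by_cases hy' : y = b
            · have hxb : x < b := hy' ▸ hxy
              have hxa : x < a := by
                rcases lt_or_ge x a with h | h
                · exact h
                · exact absurd hxb (not_lt.mpr (hc2 hy' (lt_of_le_of_ne h (Ne.symm hx))))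
              have e : F (x, y) = (x, a) := by rw [hFxy, htx, hy', htb]
              have hcond : ¬ ((x = a ∧ a < a ∧ a < b) ∨ (a = b ∧ a < x ∧ x < b)) := by
                push_neg
                exact ⟨fun h => absurd h hx, fun h => absurd h (ne_of_lt hab)⟩
              refine ⟨by rw [e]; exact hxa, ?_, ?_⟩
              · rw [e]; intro hcon
                exact hx ((Prod.ext_iff.mp hcon).1)
              · have e3 : F (x, a) = (t x, t a) := hFneg (x, a) hcond
                rw [e, e3, htx, hta, hy']
            · have hty : t y = y := htfix y hy hy'
              have e : F (x, y) = (x, y) := by rw [hFxy, htx, hty]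
              refine ⟨?_, ?_, ?_⟩
              · rw [e]; exact hxy
              · rw [e]; exact hne
              · rw [e, e]
  have hFmem : ∀ x y : Fin n, x < y → (x, y) ≠ (a, b) →
      ((w * t) y < (w * t) x ↔ w (F (x, y)).2 < w (F (x, y)).1) := by
    intro x y hxy hne
    simp only [Perm.mul_apply]
    by_cases hc : (x = a ∧ a < y ∧ y < b) ∨ (y = b ∧ a < x ∧ x < b)
    · have e : F (x, y) = (x, y) := hFpos (x, y) hc
      rw [e]
      rcases hc with ⟨h1, h2, h3⟩ | ⟨h1, h2, h3⟩
      · -- x = a, a < y < b : LHS w y < w b, RHS w y < w a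
        subst h1
        rw [htfix y (ne_of_gt h2) (ne_of_lt h3), hta]
        rcases hdich y h2 h3 with h | h
        · constructor
          · intro _; exact h
          · intro _; exact lt_trans h hw
        · constructor
          · intro hcon; exact absurd (lt_trans h hcon) (lt_irrefl _)
          · intro hcon; exact absurd (lt_trans hw (lt_trans h hcon)) (lt_irrefl _)
      · -- y = b, a < x < b : LHS w a < w x, RHS w b < w x
        subst h1
        rw [htfix x (ne_of_gt h2) (ne_of_lt h3), htb]
        rcases hdich x h2 h3 with h | h
        · constructor
          · intro hcon; exact absurd (lt_trans h hcon) (lt_irrefl _)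
          · intro hcon; exact absurd (lt_trans hw hcon) (not_lt.mpr (le_of_lt h))
        · constructor
          · intro _; exact h
          · intro _; exact lt_trans hw h
    · have e : F (x, y) = (t x, t y) := hFneg (x, y) hc
      rw [e]
  have habS : (a, b) ∉ S := by
    rw [hS, Finset.mem_filter]
    rintro ⟨-, -, hcon⟩
    exact absurd (lt_trans hw hcon) (lt_irrefl _)
  have key : (S'.erase (a, b)).card = S.card := by
    apply Finset.card_nbij' F F
    · intro q hq
      rw [Finset.mem_coe, Finset.mem_erase] at hq
      obtain ⟨hne, hq⟩ := hq
      rw [hS', Finset.mem_filter] at hq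
      obtain ⟨-, hlt, hinv⟩ := hq
      have h1 := hFsort q.1 q.2 hlt (by rwa [Prod.mk.eta])
      have h2 := hFmem q.1 q.2 hlt (by rwa [Prod.mk.eta])
      rw [Prod.mk.eta] at h1 h2
      rw [Finset.mem_coe, hS, Finset.mem_filter]
      exact ⟨Finset.mem_univ _, h1.1, h2.mp hinv⟩
    · intro q hq
      rw [Finset.mem_coe, hS, Finset.mem_filter] at hq
      obtain ⟨-, hlt, hinv⟩ := hq
      have hne : q ≠ (a, b) := by
        intro hcon
        rw [hcon] at hinv
        exact absurd (lt_trans hw hinv) (lt_irrefl _)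
      have h1 := hFsort q.1 q.2 hlt (by rwa [Prod.mk.eta])
      rw [Prod.mk.eta] at h1
      obtain ⟨hs1, hs2, hs3⟩ := h1
      have h2 := hFmem (F q).1 (F q).2 hs1 (by rwa [Prod.mk.eta])
      rw [Prod.mk.eta, hs3] at h2
      rw [Finset.mem_coe, Finset.mem_erase]
      refine ⟨hs2, ?_⟩
      rw [hS', Finset.mem_filter]
      exact ⟨Finset.mem_univ _, hs1, h2.mpr hinv⟩
    · intro q hq
      rw [Finset.mem_coe, Finset.mem_erase] at hq
      obtain ⟨hne, hq⟩ := hq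
      rw [hS', Finset.mem_filter] at hq
      have h1 := hFsort q.1 q.2 hq.2.1 (by rwa [Prod.mk.eta])
      rw [Prod.mk.eta] at h1
      exact h1.2.2
    · intro q hq
      rw [Finset.mem_coe, hS, Finset.mem_filter] at hq
      have hne : q ≠ (a, b) := by
        intro hcon
        rw [hcon] at hq
        exact absurd (lt_trans hw hq.2.2) (lt_irrefl _)
      have h1 := hFsort q.1 q.2 hq.2.1 (by rwa [Prod.mk.eta])
      rw [Prod.mk.eta] at h1
      exact h1.2.2
  have hcard : S'.card = (S'.erase (a, b)).card + 1 :=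
    (Finset.card_erase_add_one hmemab).symm
  have e1 : len (w * t) = S'.card := rfl
  have e2 : len w = S.card := rfl
  rw [e1, e2, hcard, key]

end SwapLen
section SwapLen2
open Equiv Finset

lemma len_mul_swap_of_gt {n : ℕ} (w : Perm (Fin n)) (a b : Fin n) (hab : a < b)
    (hw : w b < w a)
    (hbet : ∀ c : Fin n, a < c → c < b → ¬ (w b < w c ∧ w c < w a)) :
    len (w * Equiv.swap a b) + 1 = len w := by
  have hwa : (w * Equiv.swap a b) a = w b := by
    simp [Perm.mul_apply]
  have hwb : (w * Equiv.swap a b) b = w a := by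
    simp [Perm.mul_apply]
  have h := len_mul_swap_of_lt (w * Equiv.swap a b) a b hab
    (by rw [hwa, hwb]; exact hw)
    (by
      intro c hac hcb
      have hc : (w * Equiv.swap a b) c = w c := by
        simp [Perm.mul_apply,
          Equiv.swap_apply_of_ne_of_ne (ne_of_gt hac) (ne_of_lt hcb)]
      rw [hwa, hwb, hc]
      exact hbet c hac hcb)
  rw [mul_assoc, Equiv.swap_mul_self, mul_one] at h
  exact h.symm

end SwapLen2

noncomputable section
open Equiv Finset
open scoped Classical

/-- Lemma 5.3, identity (5.5) / `l:statids`, `eq:yid`.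
Let `W = δ(U(π,u,yu)) ∈ T_I(G)` with `ζ(W) = δ(U(π̂,u,ŷu)) ≠ W`, where the
`ζ`-move (recorded by `Z`) swaps the terminal subpaths of
`π_{u_j}, π_{u_{j'}}` at the central vertex of `G_{J_p}`, and `ŷ ∈ S_λ` is
determined by `typeOf π̂ = u ∘ ŷ ∘ u⁻¹`.  Then `ℓ(ŷ) = ℓ(y) − 1` if the
triple `(π_{u_j}, π_{u_{j'}}, p)` is a proper crossing or a defective
noncrossing, and `ℓ(ŷ) = ℓ(y) + 1` if it is a proper noncrossing or a
defective crossing. -/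
theorem zeta_move_length_cases
    {n m : ℕ} (Js : Fin m → Fin n × Fin n) (hJs : ∀ p, (Js p).1 ≤ (Js p).2)
    (lam : List ℕ) (hsum : lam.sum = n) (hpos : ∀ x ∈ lam, 0 < x)
    (hsort : lam.Pairwise (fun a b => b ≤ a))
    (u : Perm (Fin n))
    (hu : ∀ i j : Fin n, i < j →
      blockIdx lam (i : ℕ) = blockIdx lam (j : ℕ) → u i < u j)
    (vs : Fin m → Perm (Fin n)) (hvs : IsPathFamily Js vs)
    (y : Perm (Fin n)) (hy : inYoung lam y)
    (hty : typeOf vs = u * y * u⁻¹)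
    (Z : ZetaData Js lam u vs)
    (yhat : Perm (Fin n)) (hyhat : inYoung lam yhat)
    (htyhat : typeOf (zetaSwap vs Z.p (u Z.j) (u Z.j')) = u * yhat * u⁻¹) :
    ((crossingAt Js vs Z.p (u Z.j) (u Z.j') ∧
        ¬ Odd (crossBefore Js vs Z.p (u Z.j) (u Z.j'))) ∨
     (¬ crossingAt Js vs Z.p (u Z.j) (u Z.j') ∧
        Odd (crossBefore Js vs Z.p (u Z.j) (u Z.j'))) →
      len yhat + 1 = len y) ∧
    ((¬ crossingAt Js vs Z.p (u Z.j) (u Z.j') ∧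
        ¬ Odd (crossBefore Js vs Z.p (u Z.j) (u Z.j'))) ∨
     (crossingAt Js vs Z.p (u Z.j) (u Z.j') ∧
        Odd (crossBefore Js vs Z.p (u Z.j) (u Z.j'))) →
      len yhat = len y + 1) := by
  classical
  -- `ŷ = y · (j j')`
  have hyhat_eq : yhat = y * Equiv.swap Z.j Z.j' := by
    have h1 : u * yhat * u⁻¹ = (u * y * u⁻¹) * Equiv.swap (u Z.j) (u Z.j') := by
      rw [← htyhat, typeOf_zetaSwap, hty]
    rw [Equiv.swap_apply_apply u Z.j Z.j'] at h1
    have h2 : u * yhat * u⁻¹ = u * (y * Equiv.swap Z.j Z.j') * u⁻¹ := by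
      rw [h1]; group
    exact mul_left_cancel (mul_right_cancel h2)
  have hjne : Z.j ≠ Z.j' := Z.hne
  have hune : u Z.j ≠ u Z.j' := fun h => hjne (u.injective h)
  have hblk : blockIdx lam (Z.j : ℕ) = blockIdx lam (Z.j' : ℕ) := by
    rw [Z.hjcol, Z.hjcol']
  have hu_iff : ∀ x x' : Fin n,
      blockIdx lam (x : ℕ) = blockIdx lam (x' : ℕ) → (x < x' ↔ u x < u x') := by
    intro x x' hb
    constructor
    · exact fun h => hu x x' h hb
    · intro h
      rcases lt_trichotomy x x' with hlt | heq | hgt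
      · exact hlt
      · rw [heq] at h; exact absurd h (lt_irrefl _)
      · exact absurd (lt_trans h (hu x' x hgt hb.symm)) (lt_irrefl _)
  have htyap : ∀ x : Fin n, typeOf vs (u x) = u (y x) := by
    intro x
    rw [hty]
    simp [Perm.mul_apply]
  have hyblk : ∀ x : Fin n,
      blockIdx lam ((y x : Fin n) : ℕ) = blockIdx lam (x : ℕ) := hy
  have hyj : y Z.j < y Z.j' := by
    have h := Z.hord
    rw [htyap, htyap] at h
    exact (hu_iff (y Z.j) (y Z.j')
      (by rw [hyblk, hyblk, Z.hjcol, Z.hjcol'])).mpr h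
  have hcolu : ∀ x : Fin n, colOf lam u (u x) = blockIdx lam (x : ℕ) := by
    intro x
    unfold colOf
    rw [← Perm.mul_apply, inv_mul_cancel, Perm.one_apply]
  have hnomeet : ∀ x x' : Fin n, x ≠ x' →
      blockIdx lam (x : ℕ) = Z.tc → blockIdx lam (x' : ℕ) = Z.tc →
      ∀ q : Fin m, Z.p < q → ¬ meetAt Js vs q (u x) (u x') := by
    intro x x' hxx hbx hbx' q hq hmeet
    exact Z.hpMax q hq ⟨u x, u x', fun h => hxx (u.injective h),
      by rw [hcolu]; exact hbx, by rw [hcolu]; exact hbx', hmeet.1, hmeet.2⟩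
  have hfin : posAt vs (Z.p.1 + 1) (u Z.j) < posAt vs (Z.p.1 + 1) (u Z.j') := by
    rw [tail_order hJs hvs hune Z.p (hnomeet Z.j Z.j' hjne Z.hjcol Z.hjcol')]
    exact Z.hord
  have hmeetp : meetAt Js vs Z.p (u Z.j) (u Z.j') := ⟨Z.hjcent, Z.hjcent'⟩
  have hcross_iff : crossingAt Js vs Z.p (u Z.j) (u Z.j') ↔
      ¬ (posAt vs (Z.p : ℕ) (u Z.j) < posAt vs (Z.p : ℕ) (u Z.j')) := by
    constructor
    · rintro ⟨-, h⟩ hord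
      exact h ⟨fun _ => hfin, fun _ => hord⟩
    · intro h
      exact ⟨hmeetp, fun hiff => h (hiff.mpr hfin)⟩
  have hparity : (posAt vs (Z.p : ℕ) (u Z.j) < posAt vs (Z.p : ℕ) (u Z.j')) ↔
      ((u Z.j < u Z.j') ↔
        ¬ Odd (crossBefore Js vs Z.p (u Z.j) (u Z.j'))) := by
    have h := parity_lemma hJs hvs hune (Z.p : ℕ) (le_of_lt Z.p.2)
    have hcb : crossBefore Js vs Z.p (u Z.j) (u Z.j') =
        ((univ : Finset (Fin m)).filter fun q : Fin m =>
          (q : ℕ) < (Z.p : ℕ) ∧ crossingAt Js vs q (u Z.j) (u Z.j')).card := by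
      unfold crossBefore
      congr 1
    rw [hcb]
    exact h
  have hujj : u Z.j < u Z.j' ↔ Z.j < Z.j' := (hu_iff Z.j Z.j' hblk).symm
  -- no intermediate positions between j and j' with intermediate values
  have hmid : ∀ k : Fin n, min Z.j Z.j' < k → k < max Z.j Z.j' →
      ¬ (y Z.j < y k ∧ y k < y Z.j') := by
    rintro k h1 h2 ⟨hy1, hy2⟩
    have hkj : k ≠ Z.j := fun h => by rw [h] at hy1; exact absurd hy1 (lt_irrefl _)
    have hkj' : k ≠ Z.j' := fun h => by rw [h] at hy2; exact absurd hy2 (lt_irrefl _)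
    have hbk : blockIdx lam (k : ℕ) = Z.tc := by
      rcases lt_or_gt_of_ne hjne with hlt | hgt
      · rw [min_eq_left (le_of_lt hlt)] at h1
        rw [max_eq_right (le_of_lt hlt)] at h2
        rw [blockIdx_between (le_of_lt h1) (le_of_lt h2)
          (Z.hjcol.trans Z.hjcol'.symm), Z.hjcol]
      · rw [min_eq_right (le_of_lt hgt)] at h1
        rw [max_eq_left (le_of_lt hgt)] at h2
        rw [blockIdx_between (le_of_lt h1) (le_of_lt h2)
          (Z.hjcol'.trans Z.hjcol.symm), Z.hjcol']
    have ht1 : typeOf vs (u Z.j) < typeOf vs (u k) := by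
      rw [htyap, htyap]
      exact (hu_iff (y Z.j) (y k) (by rw [hyblk, hyblk, Z.hjcol, hbk])).mp hy1
    have ht2 : typeOf vs (u k) < typeOf vs (u Z.j') := by
      rw [htyap, htyap]
      exact (hu_iff (y k) (y Z.j') (by rw [hyblk, hyblk, hbk, Z.hjcol'])).mp hy2
    have hukj : u Z.j ≠ u k := fun h => hkj (u.injective h.symm)
    have hukj' : u k ≠ u Z.j' := fun h => hkj' (u.injective h)
    have hcent : centeredAt Js vs Z.p (u k) := by
      refine ⟨Z.hjcent.1, ?_⟩
      by_contra hnm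
      have hps : posAt vs (Z.p.1 + 1) = vs Z.p * posAt vs (Z.p : ℕ) := by
        rw [posAt_succ vs Z.p.1 Z.p.2, Fin.eta]
      have hfix : posAt vs (Z.p.1 + 1) (u k) = posAt vs (Z.p : ℕ) (u k) := by
        rw [hps, Perm.mul_apply, fixOut hvs Z.p hnm]
      have ho1 : posAt vs (Z.p.1 + 1) (u Z.j) < posAt vs (Z.p.1 + 1) (u k) := by
        rw [tail_order hJs hvs hukj Z.p
          (hnomeet Z.j k (Ne.symm hkj) Z.hjcol hbk)]
        exact ht1
      have ho2 : posAt vs (Z.p.1 + 1) (u k) < posAt vs (Z.p.1 + 1) (u Z.j') := by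
        rw [tail_order hJs hvs hukj' Z.p (hnomeet k Z.j' hkj' hbk Z.hjcol')]
        exact ht2
      have hm1 : memJ (Js Z.p) (posAt vs (Z.p.1 + 1) (u Z.j)) := by
        rw [hps, Perm.mul_apply]
        exact mapsJ hvs Z.p Z.hjcent.2
      have hm2 : memJ (Js Z.p) (posAt vs (Z.p.1 + 1) (u Z.j')) := by
        rw [hps, Perm.mul_apply]
        exact mapsJ hvs Z.p Z.hjcent'.2
      have hmk : memJ (Js Z.p) (posAt vs (Z.p.1 + 1) (u k)) :=
        ⟨le_trans hm1.1 (le_of_lt ho1), le_trans (le_of_lt ho2) hm2.2⟩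
      rw [hfix] at hmk
      exact hnm hmk
    rcases Z.hmax k Z.j' hkj' hbk Z.hjcol' hcent Z.hjcent' ht2 with h | ⟨-, h⟩
    · exact absurd h (lt_irrefl _)
    · exact absurd (lt_of_lt_of_le ht1 h) (lt_irrefl _)
  constructor
  · rintro (⟨hc, ho⟩ | ⟨hc, ho⟩)
    · -- proper crossing
      have hnotlt : ¬ (Z.j < Z.j') := by
        intro hjj
        exact (hcross_iff.mp hc) (hparity.mpr (iff_of_true (hujj.mpr hjj) ho))
      have hj'j : Z.j' < Z.j := lt_of_le_of_ne (not_lt.mp hnotlt) (Ne.symm hjne)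
      have hbet' : ∀ c : Fin n, Z.j' < c → c < Z.j →
          ¬ (y Z.j < y c ∧ y c < y Z.j') := by
        intro c h1 h2
        apply hmid c
        · rw [min_eq_right (le_of_lt hj'j)]; exact h1
        · rw [max_eq_left (le_of_lt hj'j)]; exact h2
      have hlen := len_mul_swap_of_gt y Z.j' Z.j hj'j hyj hbet'
      rw [hyhat_eq, Equiv.swap_comm]
      exact hlen
    · -- defective noncrossing
      have hordp : posAt vs (Z.p : ℕ) (u Z.j) < posAt vs (Z.p : ℕ) (u Z.j') := by
        by_contra hn
        exact hc (hcross_iff.mpr hn)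
      have hnotlt : ¬ (Z.j < Z.j') := by
        intro hjj
        exact (hparity.mp hordp).mp (hujj.mpr hjj) ho
      have hj'j : Z.j' < Z.j := lt_of_le_of_ne (not_lt.mp hnotlt) (Ne.symm hjne)
      have hbet' : ∀ c : Fin n, Z.j' < c → c < Z.j →
          ¬ (y Z.j < y c ∧ y c < y Z.j') := by
        intro c h1 h2
        apply hmid c
        · rw [min_eq_right (le_of_lt hj'j)]; exact h1
        · rw [max_eq_left (le_of_lt hj'j)]; exact h2
      have hlen := len_mul_swap_of_gt y Z.j' Z.j hj'j hyj hbet'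
      rw [hyhat_eq, Equiv.swap_comm]
      exact hlen
  · rintro (⟨hc, ho⟩ | ⟨hc, ho⟩)
    · -- proper noncrossing
      have hordp : posAt vs (Z.p : ℕ) (u Z.j) < posAt vs (Z.p : ℕ) (u Z.j') := by
        by_contra hn
        exact hc (hcross_iff.mpr hn)
      have hjj : Z.j < Z.j' := hujj.mp ((hparity.mp hordp).mpr ho)
      have hbet' : ∀ c : Fin n, Z.j < c → c < Z.j' →
          ¬ (y Z.j < y c ∧ y c < y Z.j') := by
        intro c h1 h2
        apply hmid c
        · rw [min_eq_left (le_of_lt hjj)]; exact h1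
        · rw [max_eq_right (le_of_lt hjj)]; exact h2
      have hlen := len_mul_swap_of_lt y Z.j Z.j' hjj hyj hbet'
      rw [hyhat_eq]
      exact hlen
    · -- defective crossing
      have hnord := hcross_iff.mp hc
      have h1 : u Z.j < u Z.j' := by
        by_contra hnu
        exact hnord (hparity.mpr (iff_of_false hnu (not_not_intro ho)))
      have hjj : Z.j < Z.j' := hujj.mp h1
      have hbet' : ∀ c : Fin n, Z.j < c → c < Z.j' →
          ¬ (y Z.j < y c ∧ y c < y Z.j') := by
        intro c h1 h2
        apply hmid c
        · rw [min_eq_left (le_of_lt hjj)]; exact h1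
        · rw [max_eq_right (le_of_lt hjj)]; exact h2
      have hlen := len_mul_swap_of_lt y Z.j Z.j' hjj hyj hbet'
      rw [hyhat_eq]
      exact hlen


end
end

section
/- Let W = δ(U(π,u,yu)) ∈ T_I(G) satisfy ζ(W) = δ(U(π̂,u,ŷu)) ≠ W, where the ζ-move swaps terminal subpaths of π_{u_j}, π_{u_{j'}} at the central vertex of G_{J_p}, and let b be the number of paths of π which enter G_{J_p} between π_{u_j} and π_{u_{j'}} and also leave G_{J_p} between these two paths. Then cross(π̂) = cross(π) − 1 − 2b if the triple (π_{u_j},π_{u_{j'}},p) is a crossing, and cross(π̂) = cross(π) + 1 + 2b otherwise. -/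
/- Common combinatorial setup: star networks, covering path families,
   crossing/noncrossing statistics, and the base ring ℤ[q^{1/2},q^{-1/2}]. -/

open Equiv Finset
open scoped Classical

noncomputable section ZetaAuxProof
open Equiv Finset
open scoped Classical

namespace ZetaAuxProof

variable {n m : ℕ}

lemma posAt_succ (vs : Fin m → Perm (Fin n)) {k : ℕ} (hk : k < m) :
    posAt vs (k + 1) = vs ⟨k, hk⟩ * posAt vs k := by
  unfold posAt
  rw [List.take_succ]
  simp [List.getElem?_ofFn, hk]

lemma swap_conj (f : Perm (Fin n)) (i i' : Fin n) :
    Equiv.swap (f i) (f i') * f = f * Equiv.swap i i' := by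
  ext x
  simp [Equiv.swap_apply_apply]

lemma posAt_zeta_le (vs : Fin m → Perm (Fin n)) (p : Fin m) (i i' : Fin n)
    {k : ℕ} (hk : k ≤ p.1) :
    posAt (zetaSwap vs p i i') k = posAt vs k := by
  induction k with
  | zero => rfl
  | succ k ih =>
    have hkm : k < m := by have := p.isLt; omega
    rw [posAt_succ _ hkm, posAt_succ _ hkm, ih (by omega)]
    have : zetaSwap vs p i i' ⟨k, hkm⟩ = vs ⟨k, hkm⟩ := by
      have : (⟨k, hkm⟩ : Fin m) ≠ p := by
        intro h
        have := congrArg Fin.val h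
        simp at this
        omega
      simp [zetaSwap, this]
    rw [this]

lemma posAt_zeta_gt (vs : Fin m → Perm (Fin n)) (p : Fin m) (i i' : Fin n)
    {k : ℕ} (hk1 : p.1 < k) (hk2 : k ≤ m) :
    posAt (zetaSwap vs p i i') k = posAt vs k * Equiv.swap i i' := by
  induction k with
  | zero => omega
  | succ k ih =>
    have hkm : k < m := by omega
    rcases Nat.lt_or_ge p.1 k with h | h
    · rw [posAt_succ _ hkm, posAt_succ _ hkm, ih h (by omega)]
      have : zetaSwap vs p i i' ⟨k, hkm⟩ = vs ⟨k, hkm⟩ := by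
        have : (⟨k, hkm⟩ : Fin m) ≠ p := by
          intro hh
          have := congrArg Fin.val hh
          simp at this
          omega
        simp [zetaSwap, this]
      rw [this, mul_assoc]
    · have hk' : k = p.1 := by omega
      have hkp : (⟨k, hkm⟩ : Fin m) = p := by
        apply Fin.ext
        simpa using hk'
      rw [posAt_succ _ hkm, posAt_zeta_le vs p i i' (le_of_eq hk'), hkp]
      have hps : posAt vs (k + 1) = vs p * posAt vs k := by
        rw [posAt_succ _ hkm, hkp]
      rw [hps]
      have : zetaSwap vs p i i' p
          = Equiv.swap (posAt vs (p.1 + 1) i) (posAt vs (p.1 + 1) i') * vs p := by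
        simp [zetaSwap]
      rw [this, mul_assoc, ← hps]
      rw [hk']
      exact swap_conj _ i i'

lemma val_min (x y : Fin n) : (min x y).val = min x.val y.val := rfl

lemma val_max (x y : Fin n) : (max x y).val = max x.val y.val := rfl

lemma crossingAt_symm (Js : Fin m → Fin n × Fin n) (w : Fin m → Perm (Fin n))
    (k : Fin m) {a b : Fin n} (hab : a ≠ b) :
    crossingAt Js w k a b ↔ crossingAt Js w k b a := by
  have h1 : (posAt w k a).val ≠ (posAt w k b).val :=
    fun h => hab ((posAt w k).injective (Fin.ext h))
  have h2 : (posAt w (k.1 + 1) a).val ≠ (posAt w (k.1 + 1) b).val :=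
    fun h => hab ((posAt w (k.1 + 1)).injective (Fin.ext h))
  unfold crossingAt meetAt
  simp only [Fin.lt_def]
  constructor <;> rintro ⟨⟨c1, c2⟩, h3⟩ <;> exact ⟨⟨c2, c1⟩, by omega⟩

/-- `2 F = G` : double counting of crossings at one factor. -/
def Fc (Js : Fin m → Fin n × Fin n) (w : Fin m → Perm (Fin n)) (k : Fin m) : ℤ :=
  ∑ a : Fin n, ∑ b : Fin n, if a < b ∧ crossingAt Js w k a b then 1 else 0

def Gc (Js : Fin m → Fin n × Fin n) (w : Fin m → Perm (Fin n)) (k : Fin m) : ℤ :=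
  ∑ a : Fin n, ∑ b : Fin n, if a ≠ b ∧ crossingAt Js w k a b then 1 else 0

lemma two_Fc (Js : Fin m → Fin n × Fin n) (w : Fin m → Perm (Fin n)) (k : Fin m) :
    2 * Fc Js w k = Gc Js w k := by
  unfold Fc Gc
  have hpt : ∀ a b : Fin n, (if a ≠ b ∧ crossingAt Js w k a b then (1:ℤ) else 0)
      = (if a < b ∧ crossingAt Js w k a b then 1 else 0)
        + (if b < a ∧ crossingAt Js w k a b then 1 else 0) := by
    intro a b
    rcases lt_trichotomy a b with h | h | h
    · simp [h, ne_of_lt h, asymm h]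
    · subst h; simp
    · simp [h, (ne_of_gt h : a ≠ b), asymm h]
  simp_rw [hpt, Finset.sum_add_distrib]
  have hswap : (∑ a : Fin n, ∑ b : Fin n, if b < a ∧ crossingAt Js w k a b then (1:ℤ) else 0)
      = ∑ a : Fin n, ∑ b : Fin n, if a < b ∧ crossingAt Js w k a b then 1 else 0 := by
    rw [Finset.sum_comm]
    refine Finset.sum_congr rfl fun a _ => Finset.sum_congr rfl fun b _ => ?_
    by_cases hab : a < b
    · have := crossingAt_symm Js w k (ne_of_lt hab)
      simp [hab, this]
    · simp [hab]
  rw [hswap]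
  ring

lemma crossNum_eq (Js : Fin m → Fin n × Fin n) (w : Fin m → Perm (Fin n)) :
    (crossNum Js w : ℤ) = ∑ k : Fin m, Fc Js w k := by
  unfold crossNum Fc
  rw [Finset.card_filter]
  push_cast
  rw [Fintype.sum_prod_type, Finset.sum_comm]
  refine Finset.sum_congr rfl fun k _ => ?_
  rw [Fintype.sum_prod_type]

lemma zeta_arith (a a' ax b b' bx : ℕ) (h2 : a ≠ ax) (h3 : a' ≠ ax)
    (h5 : b ≠ bx) (h6 : b' ≠ bx) :
    ((if ¬(a < ax ↔ b' < bx) then (1:ℤ) else 0) - (if ¬(a < ax ↔ b < bx) then 1 else 0))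
      + ((if ¬(a' < ax ↔ b < bx) then 1 else 0) - (if ¬(a' < ax ↔ b' < bx) then 1 else 0)) =
    2 * (if ¬(a < a' ↔ b < b') then (-1:ℤ) else 1) *
      (if ((min a a' < ax ∧ ax < max a a') ∧ (min b b' < bx ∧ bx < max b b')) then 1 else 0) := by
  split_ifs <;> omega

end ZetaAuxProof
end ZetaAuxProof

noncomputable section
open Equiv Finset
open scoped Classical

/-- Lemma 5.3, identity (5.6) / `l:statids`,
`eq:crossid`.  Let `W = δ(U(π,u,yu)) ∈ T_I(G)` with
`ζ(W) = δ(U(π̂,u,ŷu)) ≠ W`, where the `ζ`-move (recorded by `Z`) swaps the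
terminal subpaths of `π_{u_j}, π_{u_{j'}}` at the central vertex of
`G_{J_p}`, and let `b` be the number of paths of `π` which enter `G_{J_p}`
between `π_{u_j}` and `π_{u_{j'}}` and also leave `G_{J_p}` between these two
paths.  Then `cross(π̂) = cross(π) − 1 − 2b` if `(π_{u_j}, π_{u_{j'}}, p)` is
a crossing, and `cross(π̂) = cross(π) + 1 + 2b` otherwise. -/
theorem zeta_move_cross_change
    {n m : ℕ} (Js : Fin m → Fin n × Fin n) (hJs : ∀ p, (Js p).1 ≤ (Js p).2)
    (lam : List ℕ) (hsum : lam.sum = n) (hpos : ∀ x ∈ lam, 0 < x)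
    (hsort : lam.Pairwise (fun a b => b ≤ a))
    (u : Perm (Fin n))
    (hu : ∀ i j : Fin n, i < j →
      blockIdx lam (i : ℕ) = blockIdx lam (j : ℕ) → u i < u j)
    (vs : Fin m → Perm (Fin n)) (hvs : IsPathFamily Js vs)
    (y : Perm (Fin n)) (hy : inYoung lam y)
    (hty : typeOf vs = u * y * u⁻¹)
    (Z : ZetaData Js lam u vs) :
    (crossingAt Js vs Z.p (u Z.j) (u Z.j') →
      crossNum Js (zetaSwap vs Z.p (u Z.j) (u Z.j')) + 1 +
          2 * betweenNum Js vs Z.p (u Z.j) (u Z.j') =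
        crossNum Js vs) ∧
    (¬ crossingAt Js vs Z.p (u Z.j) (u Z.j') →
      crossNum Js (zetaSwap vs Z.p (u Z.j) (u Z.j')) =
        crossNum Js vs + 1 + 2 * betweenNum Js vs Z.p (u Z.j) (u Z.j')) := by
  classical
  have hjcent := Z.hjcent
  have hjcent' := Z.hjcent'
  have hneu : u Z.j ≠ u Z.j' := fun h => Z.hne (u.injective h)
  set p : Fin m := Z.p with hpdef
  set i : Fin n := u Z.j with hidef
  set i' : Fin n := u Z.j' with hi'def
  have hii : i ≠ i' := hneu
  set σ : Perm (Fin n) := Equiv.swap i i' with hσdef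
  set vh : Fin m → Perm (Fin n) := zetaSwap vs p i i' with hvhdef
  have hpm : p.1 < m := p.isLt
  -- position lemmas
  have hposle : ∀ k : ℕ, k ≤ p.1 → posAt vh k = posAt vs k := fun k hk =>
    ZetaAuxProof.posAt_zeta_le vs p i i' hk
  have hposgt : ∀ k : ℕ, p.1 < k → k ≤ m → posAt vh k = posAt vs k * σ := fun k h1 h2 =>
    ZetaAuxProof.posAt_zeta_gt vs p i i' h1 h2
  have hσi : σ i = i' := Equiv.swap_apply_left i i'
  have hσi' : σ i' = i := Equiv.swap_apply_right i i'
  have hσx : ∀ x : Fin n, x ≠ i → x ≠ i' → σ x = x := fun x h1 h2 =>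
    Equiv.swap_apply_of_ne_of_ne h1 h2
  have hval : ∀ (f : Perm (Fin n)) (x y : Fin n), x ≠ y → (f x).val ≠ (f y).val :=
    fun f x y h hh => h (f.injective (Fin.ext hh))
  -- crossing at p for vh
  have hcrossvh : ∀ a b : Fin n, crossingAt Js vh p a b ↔
      (meetAt Js vs p a b ∧ ¬(posAt vs ↑p a < posAt vs ↑p b ↔
        posAt vs (p.1 + 1) (σ a) < posAt vs (p.1 + 1) (σ b))) := by
    intro a b
    unfold crossingAt meetAt centeredAt
    rw [hposle ↑p le_rfl, hposgt (p.1 + 1) (Nat.lt_succ_self _) hpm]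
    simp only [Equiv.Perm.mul_apply]
  -- crossing at p for vs, val form for the special pair
  have hεiff : crossingAt Js vs p i i' ↔
      ¬((posAt vs ↑p i).val < (posAt vs ↑p i').val ↔
        (posAt vs (p.1 + 1) i).val < (posAt vs (p.1 + 1) i').val) := by
    unfold crossingAt
    simp only [Fin.lt_def]
    exact ⟨fun h => h.2, fun h => ⟨⟨hjcent, hjcent'⟩, h⟩⟩
  -- off-p factors
  have hFk : ∀ k : Fin m, k ≠ p → ZetaAuxProof.Fc Js vh k = ZetaAuxProof.Fc Js vs k := by
    intro k hk
    have hkp : k.1 ≠ p.1 := fun h => hk (Fin.ext h)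
    rcases Nat.lt_or_ge k.1 p.1 with h | h
    · have hq : ∀ a b : Fin n, crossingAt Js vh k a b ↔ crossingAt Js vs k a b := by
        intro a b
        unfold crossingAt meetAt centeredAt
        rw [hposle ↑k (le_of_lt h), hposle (k.1 + 1) (by omega)]
      unfold ZetaAuxProof.Fc
      exact Finset.sum_congr rfl fun a _ => Finset.sum_congr rfl fun b _ => by
        rw [if_congr (and_congr Iff.rfl (hq a b)) rfl rfl]
    · have hgt : p.1 < k.1 := by omega
      have hq : ∀ a b : Fin n, crossingAt Js vh k a b ↔ crossingAt Js vs k (σ a) (σ b) := by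
        intro a b
        unfold crossingAt meetAt centeredAt
        rw [hposgt ↑k hgt (le_of_lt k.isLt), hposgt (k.1 + 1) (by omega) k.isLt]
        simp only [Equiv.Perm.mul_apply]
      have hG : ZetaAuxProof.Gc Js vh k = ZetaAuxProof.Gc Js vs k := by
        unfold ZetaAuxProof.Gc
        have step1 : (∑ a : Fin n, ∑ b : Fin n,
              if a ≠ b ∧ crossingAt Js vh k a b then (1:ℤ) else 0)
            = ∑ a : Fin n, ∑ b : Fin n,
              if σ a ≠ σ b ∧ crossingAt Js vs k (σ a) (σ b) then (1:ℤ) else 0 := by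
          refine Finset.sum_congr rfl fun a _ => Finset.sum_congr rfl fun b _ => ?_
          have hab : (a ≠ b) ↔ (σ a ≠ σ b) := by
            constructor
            · exact fun hh h2 => hh (σ.injective h2)
            · exact fun hh h2 => hh (congrArg σ h2)
          rw [if_congr (and_congr hab (hq a b)) rfl rfl]
        rw [step1]
        have step2 : ∀ c : Fin n, (∑ b : Fin n,
              if c ≠ σ b ∧ crossingAt Js vs k c (σ b) then (1:ℤ) else 0)
            = ∑ b : Fin n, if c ≠ b ∧ crossingAt Js vs k c b then (1:ℤ) else 0 :=
          fun c => Equiv.sum_comp σ (fun b => if c ≠ b ∧ crossingAt Js vs k c b then (1:ℤ) else 0)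
        calc (∑ a : Fin n, ∑ b : Fin n,
              if σ a ≠ σ b ∧ crossingAt Js vs k (σ a) (σ b) then (1:ℤ) else 0)
            = ∑ a : Fin n, ∑ b : Fin n,
              if σ a ≠ b ∧ crossingAt Js vs k (σ a) b then (1:ℤ) else 0 :=
              Finset.sum_congr rfl fun a _ => step2 (σ a)
          _ = ∑ a : Fin n, ∑ b : Fin n,
              if a ≠ b ∧ crossingAt Js vs k a b then (1:ℤ) else 0 :=
              Equiv.sum_comp σ (fun a => ∑ b : Fin n,
                if a ≠ b ∧ crossingAt Js vs k a b then (1:ℤ) else 0)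
      have h1 := ZetaAuxProof.two_Fc Js vh k
      have h2 := ZetaAuxProof.two_Fc Js vs k
      omega
  -- the difference function at factor p
  set D : Fin n → Fin n → ℤ := fun a b =>
    (if a ≠ b ∧ crossingAt Js vh p a b then (1:ℤ) else 0) -
    (if a ≠ b ∧ crossingAt Js vs p a b then (1:ℤ) else 0) with hDdef
  set ε : ℤ := if crossingAt Js vs p i i' then -1 else 1 with hεdef
  set E : ℤ := ε * (1 + 2 * (betweenNum Js vs p i i' : ℤ)) with hEdef
  have hD0 : ∀ a b : Fin n, a ≠ i → a ≠ i' → b ≠ i → b ≠ i' → D a b = 0 := by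
    intro a b ha ha' hb hb'
    have hiff : crossingAt Js vh p a b ↔ crossingAt Js vs p a b := by
      rw [hcrossvh a b, hσx a ha ha', hσx b hb hb']
      exact Iff.rfl
    simp only [hDdef, hiff]
    ring
  have hDsymm : ∀ a b : Fin n, D a b = D b a := by
    intro a b
    by_cases hab : a = b
    · subst hab; simp [hDdef]
    · have h1 := ZetaAuxProof.crossingAt_symm Js vh p hab
      have h2 := ZetaAuxProof.crossingAt_symm Js vs p hab
      simp only [hDdef, h1, h2, ne_eq, hab, Ne.symm hab, not_false_eq_true, true_and]
  have hDii : D i i = 0 := by simp [hDdef]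
  have hDi'i' : D i' i' = 0 := by simp [hDdef]
  have hlii : (posAt vs (p.1 + 1) i).val ≠ (posAt vs (p.1 + 1) i').val := hval _ _ _ hii
  have hDii' : D i i' = ε := by
    have hm : meetAt Js vs p i i' := ⟨hjcent, hjcent'⟩
    have hy : crossingAt Js vh p i i' ↔
        ¬((posAt vs ↑p i).val < (posAt vs ↑p i').val ↔
          (posAt vs (p.1 + 1) i').val < (posAt vs (p.1 + 1) i).val) := by
      rw [hcrossvh i i', hσi, hσi']
      simp only [Fin.lt_def]
      exact ⟨fun h => h.2, fun h => ⟨hm, h⟩⟩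
    by_cases hc : crossingAt Js vs p i i'
    · have hnc : ¬ crossingAt Js vh p i i' := by
        rw [hy]
        have h3 := hεiff.mp hc
        omega
      simp [hDdef, hεdef, hii, hc, hnc]
    · have hyc : crossingAt Js vh p i i' := by
        rw [hy]
        have h3 : ¬¬((posAt vs ↑p i).val < (posAt vs ↑p i').val ↔
            (posAt vs (p.1 + 1) i).val < (posAt vs (p.1 + 1) i').val) :=
          fun hh => hc (hεiff.mpr hh)
        omega
      simp [hDdef, hεdef, hii, hc, hyc]
  have hKeyB : ∀ x : Fin n, x ≠ i → x ≠ i' → D i x + D i' x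
      = 2 * ε * (if (x ≠ i ∧ x ≠ i' ∧ centeredAt Js vs p x ∧
          (min (posAt vs ↑p i) (posAt vs ↑p i') < posAt vs ↑p x ∧
            posAt vs ↑p x < max (posAt vs ↑p i) (posAt vs ↑p i')) ∧
          (min (posAt vs (p.1 + 1) i) (posAt vs (p.1 + 1) i') < posAt vs (p.1 + 1) x ∧
            posAt vs (p.1 + 1) x < max (posAt vs (p.1 + 1) i) (posAt vs (p.1 + 1) i')))
          then (1:ℤ) else 0) := by
    intro x hxi hxi'
    have hix : i ≠ x := Ne.symm hxi
    have hix' : i' ≠ x := Ne.symm hxi'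
    by_cases hcx : centeredAt Js vs p x
    · have hm1 : meetAt Js vs p i x := ⟨hjcent, hcx⟩
      have hm2 : meetAt Js vs p i' x := ⟨hjcent', hcx⟩
      have c1 : crossingAt Js vh p i x ↔
          ¬((posAt vs ↑p i).val < (posAt vs ↑p x).val ↔
            (posAt vs (p.1 + 1) i').val < (posAt vs (p.1 + 1) x).val) := by
        rw [hcrossvh i x, hσi, hσx x hxi hxi']
        simp only [Fin.lt_def]
        exact ⟨fun h => h.2, fun h => ⟨hm1, h⟩⟩
      have c2 : crossingAt Js vh p i' x ↔
          ¬((posAt vs ↑p i').val < (posAt vs ↑p x).val ↔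
            (posAt vs (p.1 + 1) i).val < (posAt vs (p.1 + 1) x).val) := by
        rw [hcrossvh i' x, hσi', hσx x hxi hxi']
        simp only [Fin.lt_def]
        exact ⟨fun h => h.2, fun h => ⟨hm2, h⟩⟩
      have c3 : crossingAt Js vs p i x ↔
          ¬((posAt vs ↑p i).val < (posAt vs ↑p x).val ↔
            (posAt vs (p.1 + 1) i).val < (posAt vs (p.1 + 1) x).val) := by
        unfold crossingAt
        simp only [Fin.lt_def]
        exact ⟨fun h => h.2, fun h => ⟨hm1, h⟩⟩
      have c4 : crossingAt Js vs p i' x ↔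
          ¬((posAt vs ↑p i').val < (posAt vs ↑p x).val ↔
            (posAt vs (p.1 + 1) i').val < (posAt vs (p.1 + 1) x).val) := by
        unfold crossingAt
        simp only [Fin.lt_def]
        exact ⟨fun h => h.2, fun h => ⟨hm2, h⟩⟩
      simp only [hDdef, hεdef, c1, c2, c3, c4, hεiff, hix, hix', hxi, hxi', hcx, ne_eq,
        not_false_eq_true, true_and, iff_true, Fin.lt_def,
        ZetaAuxProof.val_min, ZetaAuxProof.val_max]
      exact ZetaAuxProof.zeta_arith _ _ _ _ _ _
        (hval _ _ _ hix) (hval _ _ _ hix') (hval _ _ _ hix) (hval _ _ _ hix')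
    · have h1 : ¬ crossingAt Js vh p i x := fun h => hcx ((hcrossvh i x).mp h).1.2
      have h2 : ¬ crossingAt Js vh p i' x := fun h => hcx ((hcrossvh i' x).mp h).1.2
      have h3 : ¬ crossingAt Js vs p i x := fun h => hcx h.1.2
      have h4 : ¬ crossingAt Js vs p i' x := fun h => hcx h.1.2
      simp [hDdef, h1, h2, h3, h4, hcx]
  -- sum decomposition at factor p
  have hpair : ({i, i'} : Finset (Fin n)) ⊆ univ := Finset.subset_univ _
  have hsum1 : ∀ a : Fin n, a ≠ i → a ≠ i' → (∑ b : Fin n, D a b) = D a i + D a i' := by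
    intro a ha ha'
    have hss : (∑ b ∈ ({i, i'} : Finset (Fin n)), D a b) = ∑ b : Fin n, D a b :=
      Finset.sum_subset hpair (fun b _ hb => hD0 a b ha ha'
        (fun h => hb (by simp [h])) (fun h => hb (by simp [h])))
    rw [← hss, Finset.sum_pair hii]
  have hGp : ZetaAuxProof.Gc Js vh p = ZetaAuxProof.Gc Js vs p + 2 * E := by
    have hGD : ZetaAuxProof.Gc Js vh p - ZetaAuxProof.Gc Js vs p
        = ∑ a : Fin n, ∑ b : Fin n, D a b := by
      unfold ZetaAuxProof.Gc
      rw [← Finset.sum_sub_distrib]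
      exact Finset.sum_congr rfl fun a _ => (Finset.sum_sub_distrib _ _).symm
    have hsplit : (∑ a : Fin n, ∑ b : Fin n, D a b)
        = (∑ a ∈ univ \ ({i, i'} : Finset (Fin n)), ∑ b : Fin n, D a b)
          + (∑ a ∈ ({i, i'} : Finset (Fin n)), ∑ b : Fin n, D a b) :=
      (Finset.sum_sdiff hpair).symm
    have hT1 : (∑ a ∈ univ \ ({i, i'} : Finset (Fin n)), ∑ b : Fin n, D a b)
        = ∑ a ∈ univ \ ({i, i'} : Finset (Fin n)), (D i a + D i' a) := by
      refine Finset.sum_congr rfl fun a ha => ?_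
      rw [Finset.mem_sdiff] at ha
      have ha1 : a ≠ i := fun h => ha.2 (by simp [h])
      have ha2 : a ≠ i' := fun h => ha.2 (by simp [h])
      rw [hsum1 a ha1 ha2, hDsymm a i, hDsymm a i']
    have hT2 : (∑ a ∈ ({i, i'} : Finset (Fin n)), ∑ b : Fin n, D a b)
        = (∑ b ∈ univ \ ({i, i'} : Finset (Fin n)), (D i b + D i' b)) + 2 * ε := by
      rw [Finset.sum_pair hii, ← Finset.sum_add_distrib]
      have hss := (Finset.sum_sdiff (f := fun b => D i b + D i' b) hpair).symm
      rw [hss, Finset.sum_pair hii]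
      rw [hDii, hDi'i', hDsymm i' i, hDii']
      ring
    have hbet : (∑ a ∈ univ \ ({i, i'} : Finset (Fin n)), (D i a + D i' a))
        = 2 * ε * (betweenNum Js vs p i i' : ℤ) := by
      have hcg : ∀ a ∈ univ \ ({i, i'} : Finset (Fin n)), D i a + D i' a
          = 2 * ε * (if (a ≠ i ∧ a ≠ i' ∧ centeredAt Js vs p a ∧
              (min (posAt vs ↑p i) (posAt vs ↑p i') < posAt vs ↑p a ∧
                posAt vs ↑p a < max (posAt vs ↑p i) (posAt vs ↑p i')) ∧
              (min (posAt vs (p.1 + 1) i) (posAt vs (p.1 + 1) i') < posAt vs (p.1 + 1) a ∧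
                posAt vs (p.1 + 1) a < max (posAt vs (p.1 + 1) i) (posAt vs (p.1 + 1) i')))
              then (1:ℤ) else 0) := by
        intro a ha
        rw [Finset.mem_sdiff] at ha
        have ha1 : a ≠ i := fun h => ha.2 (by simp [h])
        have ha2 : a ≠ i' := fun h => ha.2 (by simp [h])
        exact hKeyB a ha1 ha2
      rw [Finset.sum_congr rfl hcg, ← Finset.mul_sum]
      congr 1
      rw [Finset.sum_boole]
      unfold betweenNum
      congr 2
      apply Finset.ext
      intro a
      simp only [Finset.mem_filter, Finset.mem_sdiff, Finset.mem_univ, true_and,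
        Finset.mem_insert, Finset.mem_singleton]
      constructor
      · exact fun h => h.2
      · exact fun h => ⟨fun hh => by tauto, h⟩
    have : (∑ a : Fin n, ∑ b : Fin n, D a b)
        = 2 * ε * (betweenNum Js vs p i i' : ℤ)
          + (2 * ε * (betweenNum Js vs p i i' : ℤ) + 2 * ε) := by
      rw [hsplit, hT1, hbet, hT2]
      rw [hbet]
    rw [hEdef]
    have := hGD.trans this
    linarith
  have hFp : ZetaAuxProof.Fc Js vh p = ZetaAuxProof.Fc Js vs p + E := by
    have h1 := ZetaAuxProof.two_Fc Js vh p
    have h2 := ZetaAuxProof.two_Fc Js vs p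
    omega
  have hcn : (crossNum Js vh : ℤ) = (crossNum Js vs : ℤ) + E := by
    rw [ZetaAuxProof.crossNum_eq, ZetaAuxProof.crossNum_eq]
    have hstep : (∑ k : Fin m, ZetaAuxProof.Fc Js vh k)
        = ∑ k : Fin m, (ZetaAuxProof.Fc Js vs k + if k = p then E else 0) := by
      refine Finset.sum_congr rfl fun k _ => ?_
      by_cases hk : k = p
      · subst hk; simp [hFp]
      · simp [hk, hFk k hk]
    rw [hstep, Finset.sum_add_distrib, Finset.sum_ite_eq' univ p (fun _ => E)]
    simp
  constructor
  · intro hcr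
    have hE : E = -(1 + 2 * (betweenNum Js vs p i i' : ℤ)) := by
      rw [hEdef, hεdef]
      simp [hcr]
    rw [hE] at hcn
    omega
  · intro hcr
    have hE : E = 1 + 2 * (betweenNum Js vs p i i' : ℤ) := by
      rw [hEdef, hεdef]
      simp [hcr]
    rw [hE] at hcn
    omega


end
end
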